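/- For any subset X of S, the map p ↦ (p restricted to X, p restricted to S \ X) is an order isomorphism from the Prikry product order 𝑃_S onto the product order (𝑃_S ↾ X) × (𝑃_S ↾ (S \ X)), where 𝑃_S ↾ Y = {p ∈ 𝑃_S : X^p ⊆ Y} and the restriction of p to Y is (X^p ∩ Y, S^p ↾ Y, H^p ↾ Y). -/
import Mathlib


/-- A (raw) condition in the class Prikry product: a domain `X`, finite stems `Sf α ⊆ α`,
and measure-one sets `H α`. -/
structure PCond where
  X : Set Ordinal
  Sf : Ordinal → Finset Ordinal
  H : Ordinal → Set Ordinal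

/-- `p` is a condition of the Prikry product `𝑃_S` with measures `U`. -/
def IsCond (S : Set Ordinal) (U : Ordinal → Set (Set Ordinal)) (p : PCond) : Prop :=
  p.X ⊆ S ∧
  (∀ α ∈ p.X, ∀ β ∈ p.Sf α, β < α) ∧
  (∀ α ∈ p.X, p.H α ∈ U α) ∧
  {α | p.Sf α ≠ ∅}.Finite ∧
  (∀ α ∈ p.X, ∀ β ∈ p.Sf α, ∀ γ ∈ p.H α, β < γ) ∧
  (∀ α ∉ p.X, p.Sf α = ∅ ∧ p.H α = ∅)

/-- `t` end-extends `s`: `s ⊆ t` and every new element lies above all of `s`. -/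
def EndExt (t s : Finset Ordinal) : Prop :=
  s ⊆ t ∧ ∀ β ∈ t, β ∉ s → ∀ γ ∈ s, γ < β

/-- The extension relation of the Prikry product. -/
def PLe (p q : PCond) : Prop :=
  q.X ⊆ p.X ∧
  (∀ α ∈ q.X, EndExt (p.Sf α) (q.Sf α)) ∧
  (∀ α ∈ q.X, ∀ β ∈ p.Sf α, β ∉ q.Sf α → β ∈ q.H α) ∧
  (∀ α ∈ q.X, p.H α ⊆ q.H α)

/-- The direct (Prikry) extension relation of the Prikry product. -/
def PLeStar (p q : PCond) : Prop :=
  q.X ⊆ p.X ∧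
  (∀ α ∈ q.X, p.Sf α = q.Sf α) ∧
  (∀ α ∈ q.X, p.H α ⊆ q.H α)

open Classical in
/-- The restriction of a condition `p` to a set `Y`. -/
noncomputable def restrict (p : PCond) (Y : Set Ordinal) : PCond where
  X := p.X ∩ Y
  Sf := fun α => if α ∈ Y then p.Sf α else ∅
  H := fun α => if α ∈ Y then p.H α else ∅

theorem PCond.ext' {p q : PCond} (h1 : p.X = q.X) (h2 : p.Sf = q.Sf)
    (h3 : p.H = q.H) : p = q := by
  cases p; cases q; simp_all

theorem isCond_restrict {S : Set Ordinal} {U : Ordinal → Set (Set Ordinal)} {p : PCond}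
    (hp : IsCond S U p) (Y : Set Ordinal) (hY : Y ⊆ S) : IsCond S U (restrict p Y) := by
  obtain ⟨h1, h2, h3, h4, h5, h6⟩ := hp
  refine ⟨fun α hα => h1 hα.1, ?_, ?_, ?_, ?_, ?_⟩
  · rintro α ⟨hα, hαY⟩ β hβ
    simp only [restrict, if_pos hαY] at hβ; exact h2 α hα β hβ
  · rintro α ⟨hα, hαY⟩
    simp only [restrict, if_pos hαY]; exact h3 α hα
  · apply h4.subset
    intro α hα
    simp only [restrict, Set.mem_setOf_eq] at hα ⊢
    intro h; apply hα; split <;> simp [h]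
  · rintro α ⟨hα, hαY⟩ β hβ γ hγ
    simp only [restrict, if_pos hαY] at hβ hγ; exact h5 α hα β hβ γ hγ
  · intro α hα
    simp only [restrict, Set.mem_inter_iff, not_and] at hα ⊢
    by_cases hαY : α ∈ Y
    · simp only [if_pos hαY]; exact h6 α (fun h => hα h hαY)
    · simp [if_neg hαY]

theorem ple_restrict {p q : PCond} (h : PLe p q) (Y : Set Ordinal) :
    PLe (restrict p Y) (restrict q Y) := by
  obtain ⟨h1, h2, h3, h4⟩ := h
  refine ⟨fun α hα => ⟨h1 hα.1, hα.2⟩, ?_, ?_, ?_⟩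
  · rintro α ⟨hα, hαY⟩
    simp only [restrict, if_pos hαY]; exact h2 α hα
  · rintro α ⟨hα, hαY⟩ β hβ hβ'
    simp only [restrict, if_pos hαY] at hβ hβ' ⊢; exact h3 α hα β hβ hβ'
  · rintro α ⟨hα, hαY⟩
    simp only [restrict, if_pos hαY]; exact h4 α hα

/-- For any `X ⊆ S`, the map `p ↦ (p ↾ X, p ↾ (S \ X))` is an order isomorphism from
`𝑃_S` onto `(𝑃_S ↾ X) × (𝑃_S ↾ (S \ X))`, ordered coordinatewise. -/
theorem stmt12 (S : Set Ordinal) (U : Ordinal → Set (Set Ordinal)) (X : Set Ordinal)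
    (hX : X ⊆ S) :
    Set.BijOn (fun p => (restrict p X, restrict p (S \ X)))
      {p | IsCond S U p}
      ({q | IsCond S U q ∧ q.X ⊆ X} ×ˢ {r | IsCond S U r ∧ r.X ⊆ S \ X}) ∧
    (∀ p q : PCond, IsCond S U p → IsCond S U q →
      (PLe p q ↔ (PLe (restrict p X) (restrict q X) ∧
        PLe (restrict p (S \ X)) (restrict q (S \ X))))) := by
  constructor
  · refine ⟨?_, ?_, ?_⟩
    · -- MapsTo
      intro p hp
      exact ⟨⟨isCond_restrict hp X hX, fun α hα => hα.2⟩,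
        ⟨isCond_restrict hp (S \ X) Set.diff_subset, fun α hα => hα.2⟩⟩
    · -- InjOn
      intro p hp q hq h
      simp only [Prod.mk.injEq] at h
      obtain ⟨hXeq, hDeq⟩ := h
      have hXX : p.X ∩ X = q.X ∩ X := congrArg PCond.X hXeq
      have hXD : p.X ∩ (S \ X) = q.X ∩ (S \ X) := congrArg PCond.X hDeq
      have hSfX := congrArg PCond.Sf hXeq
      have hSfD := congrArg PCond.Sf hDeq
      have hHX := congrArg PCond.H hXeq
      have hHD := congrArg PCond.H hDeq
      simp only [restrict] at hSfX hSfD hHX hHD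
      have hXeq' : p.X = q.X := by
        ext α
        constructor <;> intro hα
        · rcases em (α ∈ X) with hx | hx
          · exact (hXX ▸ ⟨hα, hx⟩ : α ∈ q.X ∩ X).1
          · exact (hXD ▸ ⟨hα, ⟨hp.1 hα, hx⟩⟩ : α ∈ q.X ∩ (S \ X)).1
        · rcases em (α ∈ X) with hx | hx
          · exact (hXX.symm ▸ ⟨hα, hx⟩ : α ∈ p.X ∩ X).1
          · exact (hXD.symm ▸ ⟨hα, ⟨hq.1 hα, hx⟩⟩ : α ∈ p.X ∩ (S \ X)).1
      refine PCond.ext' hXeq' (funext fun α => ?_) (funext fun α => ?_)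
      · rcases em (α ∈ X) with hx | hx
        · have := congrFun hSfX α; simpa [if_pos hx] using this
        · rcases em (α ∈ S) with hs | hs
          · have := congrFun hSfD α; simpa [if_pos (show α ∈ S \ X from ⟨hs, hx⟩)] using this
          · rw [(hp.2.2.2.2.2 α (fun h => hs (hp.1 h))).1,
              (hq.2.2.2.2.2 α (fun h => hs (hq.1 h))).1]
      · rcases em (α ∈ X) with hx | hx
        · have := congrFun hHX α; simpa [if_pos hx] using this
        · rcases em (α ∈ S) with hs | hs
          · have := congrFun hHD α; simpa [if_pos (show α ∈ S \ X from ⟨hs, hx⟩)] using this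
          · rw [(hp.2.2.2.2.2 α (fun h => hs (hp.1 h))).2,
              (hq.2.2.2.2.2 α (fun h => hs (hq.1 h))).2]
    · -- SurjOn
      rintro ⟨q, r⟩ ⟨⟨hq, hqX⟩, ⟨hr, hrX⟩⟩
      classical
      set p : PCond := ⟨q.X ∪ r.X,
        fun α => if α ∈ X then q.Sf α else r.Sf α,
        fun α => if α ∈ X then q.H α else r.H α⟩ with hpdef
      have hdisj : ∀ α ∈ r.X, α ∉ X := fun α hα => (hrX hα).2
      have hrSf : ∀ α ∈ X, r.Sf α = ∅ ∧ r.H α = ∅ := fun α hα =>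
        hr.2.2.2.2.2 α (fun h => (hrX h).2 hα)
      have hqSf : ∀ α ∉ X, q.Sf α = ∅ ∧ q.H α = ∅ := fun α hα =>
        hq.2.2.2.2.2 α (fun h => hα (hqX h))
      have hpcond : IsCond S U p := by
        refine ⟨?_, ?_, ?_, ?_, ?_, ?_⟩
        · rintro α (hα | hα)
          · exact hX (hqX hα)
          · exact (hrX hα).1
        · rintro α (hα | hα) β hβ
          · simp only [hpdef, if_pos (hqX hα)] at hβ; exact hq.2.1 α hα β hβ
          · simp only [hpdef, if_neg (hdisj α hα)] at hβ; exact hr.2.1 α hα β hβ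
        · rintro α (hα | hα)
          · simp only [hpdef, if_pos (hqX hα)]; exact hq.2.2.1 α hα
          · simp only [hpdef, if_neg (hdisj α hα)]; exact hr.2.2.1 α hα
        · apply (hq.2.2.2.1.union hr.2.2.2.1).subset
          intro α hα
          simp only [hpdef, Set.mem_setOf_eq, Set.mem_union] at hα ⊢
          by_cases hx : α ∈ X
          · left; simpa [if_pos hx] using hα
          · right; simpa [if_neg hx] using hα
        · rintro α (hα | hα) β hβ γ hγ
          · simp only [hpdef, if_pos (hqX hα)] at hβ hγ; exact hq.2.2.2.2.1 α hα β hβ γ hγ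
          · simp only [hpdef, if_neg (hdisj α hα)] at hβ hγ; exact hr.2.2.2.2.1 α hα β hβ γ hγ
        · intro α hα
          simp only [hpdef, Set.mem_union, not_or] at hα ⊢
          obtain ⟨hα1, hα2⟩ := hα
          by_cases hx : α ∈ X
          · simp only [if_pos hx]; exact hq.2.2.2.2.2 α hα1
          · simp only [if_neg hx]; exact hr.2.2.2.2.2 α hα2
      refine ⟨p, hpcond, ?_⟩
      simp only [Prod.mk.injEq]
      constructor
      · refine PCond.ext' ?_ (funext fun α => ?_) (funext fun α => ?_)
        · show (q.X ∪ r.X) ∩ X = q.X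
          ext α
          simp only [Set.mem_inter_iff, Set.mem_union]
          constructor
          · rintro ⟨hα | hα, hx⟩
            · exact hα
            · exact absurd hx (hdisj α hα)
          · exact fun h => ⟨Or.inl h, hqX h⟩
        · simp only [restrict, hpdef]
          by_cases hx : α ∈ X
          · simp [if_pos hx]
          · simp [if_neg hx, (hqSf α hx).1]
        · simp only [restrict, hpdef]
          by_cases hx : α ∈ X
          · simp [if_pos hx]
          · simp [if_neg hx, (hqSf α hx).2]
      · refine PCond.ext' ?_ (funext fun α => ?_) (funext fun α => ?_)
        · show (q.X ∪ r.X) ∩ (S \ X) = r.X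
          ext α
          simp only [Set.mem_inter_iff, Set.mem_union]
          constructor
          · rintro ⟨hα | hα, hs, hx⟩
            · exact absurd (hqX hα) hx
            · exact hα
          · exact fun h => ⟨Or.inr h, hrX h⟩
        · simp only [restrict, hpdef]
          by_cases hd : α ∈ S \ X
          · rw [if_pos hd, if_neg hd.2]
          · rw [if_neg hd]
            by_cases hx : α ∈ X
            · exact ((hrSf α hx).1).symm
            · exact ((hr.2.2.2.2.2 α (fun h => hd (hrX h))).1).symm
        · simp only [restrict, hpdef]
          by_cases hd : α ∈ S \ X
          · rw [if_pos hd, if_neg hd.2]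
          · rw [if_neg hd]
            by_cases hx : α ∈ X
            · exact ((hrSf α hx).2).symm
            · exact ((hr.2.2.2.2.2 α (fun h => hd (hrX h))).2).symm
  · -- order iso
    intro p q hp hq
    constructor
    · exact fun h => ⟨ple_restrict h X, ple_restrict h (S \ X)⟩
    · rintro ⟨⟨a1, a2, a3, a4⟩, ⟨b1, b2, b3, b4⟩⟩
      have hcase : ∀ α ∈ q.X, α ∈ X ∨ α ∈ S \ X := by
        intro α hα
        by_cases hx : α ∈ X
        · exact Or.inl hx
        · exact Or.inr ⟨hq.1 hα, hx⟩
      refine ⟨?_, ?_, ?_, ?_⟩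
      · intro α hα
        rcases hcase α hα with hx | hx
        · exact (a1 ⟨hα, hx⟩).1
        · exact (b1 ⟨hα, hx⟩).1
      · intro α hα
        rcases hcase α hα with hx | hx
        · have := a2 α ⟨hα, hx⟩; simpa [restrict, if_pos hx] using this
        · have := b2 α ⟨hα, hx⟩; simpa [restrict, if_pos hx] using this
      · intro α hα β hβ hβ'
        rcases hcase α hα with hx | hx
        · have := a3 α ⟨hα, hx⟩ β; simp only [restrict, if_pos hx] at this; exact this hβ hβ'
        · have := b3 α ⟨hα, hx⟩ β; simp only [restrict, if_pos hx] at this; exact this hβ hβ'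
      · intro α hα
        rcases hcase α hα with hx | hx
        · have := a4 α ⟨hα, hx⟩; simpa [restrict, if_pos hx] using this
        · have := b4 α ⟨hα, hx⟩; simpa [restrict, if_pos hx] using this
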